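/- Let $(Y_n)_{n\ge 1}$ be i.i.d. with $\Pr(Y_1 > 0) > 0$, and let $X$ be the AR(2)-process $X_n = a_1 X_{n-1} + a_2 X_{n-2} + Y_n$ with $a_1 > 0$ and $a_1^2 + 4a_2 < 0$. Then there exists $\lambda > 0$ such that $\Pr(\max_{1\le n\le N} X_n \le 0) \le e^{-\lambda N}$ for all sufficiently large $N$. -/

import Mathlib

open MeasureTheory ProbabilityTheory Finset

/-- Solution of the homogeneous recurrence with `b 0 = 0`, `b 1 = 1`. -/
def bb (a1 a2 : ℝ) : ℕ → ℝ
  | 0 => 0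
  | 1 => 1
  | n + 2 => a1 * bb a1 a2 (n + 1) + a2 * bb a1 a2 n

lemma bb_zero (a1 a2 : ℝ) : bb a1 a2 0 = 0 := rfl
lemma bb_one (a1 a2 : ℝ) : bb a1 a2 1 = 1 := rfl
lemma bb_rec (a1 a2 : ℝ) (n : ℕ) :
    bb a1 a2 (n + 2) = a1 * bb a1 a2 (n + 1) + a2 * bb a1 a2 n := rfl

lemma exists_bb_nonpos (a1 a2 : ℝ) (ha1 : 0 < a1) (hd : a1 ^ 2 + 4 * a2 < 0) :
    ∃ n, bb a1 a2 (n + 1) ≤ 0 := by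
  by_contra hc
  push_neg at hc
  set b := bb a1 a2 with hb
  set δ : ℝ := -(a1 ^ 2 + 4 * a2) / 4 with hδ
  have hδpos : 0 < δ := by rw [hδ]; linarith
  set ε : ℝ := δ / a1 with hε
  have hεpos : 0 < ε := div_pos hδpos ha1
  have hεa1 : ε * a1 = δ := by rw [hε]; field_simp [ha1.ne']
  set r : ℕ → ℝ := fun n => b (n + 2) / b (n + 1) with hr
  have hrpos : ∀ n, 0 < r n := fun n => div_pos (hc (n + 1)) (hc n)
  have key : ∀ n, r n ≤ a1 - n * ε := by
    intro n
    induction n with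
    | zero =>
      have : r 0 = a1 := by
        simp [hr, hb, bb]
      simp [this]
    | succ n ih =>
      have h1 : r n ≤ a1 := by
        have : (n : ℝ) * ε ≥ 0 := by positivity
        linarith
      have hb1 : (0:ℝ) < b (n + 1) := hc n
      have hb2 : (0:ℝ) < b (n + 2) := hc (n + 1)
      have hrecb : b (n + 3) = a1 * b (n + 2) + a2 * b (n + 1) := bb_rec a1 a2 (n + 1)
      have hmul : r (n + 1) * r n = a1 * r n + a2 := by
        show (b (n + 3) / b (n + 2)) * (b (n + 2) / b (n + 1))
            = a1 * (b (n + 2) / b (n + 1)) + a2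
        rw [hrecb]
        field_simp
      have quad : δ ≤ r n ^ 2 - a1 * r n - a2 := by
        nlinarith [sq_nonneg (r n - a1 / 2)]
      have hstep : r (n + 1) ≤ r n - ε := by
        have hle : ε * r n ≤ δ := by
          calc ε * r n ≤ ε * a1 := by nlinarith [hεpos, h1, hrpos n]
            _ = δ := hεa1
        nlinarith [hrpos n, hmul, quad, hle]
      have : (n : ℝ) + 1 = ((n + 1 : ℕ) : ℝ) := by push_cast; ring
      push_cast
      linarith [ih]
  obtain ⟨n, hn⟩ := exists_nat_gt (a1 / ε)
  have h2 : a1 < n * ε := by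
    rwa [div_lt_iff₀ hεpos] at hn
  have := key n
  have := hrpos n
  linarith

/-- Variation-of-constants identity for the AR(2) recursion. -/
lemma key_id (a1 a2 : ℝ) (X Y : ℕ → ℝ)
    (hXrec : ∀ n, 1 ≤ n → X n = a1 * X (n - 1) + a2 * X (n - 2) + Y n) (m : ℕ) :
    ∀ j, X (m + j) = bb a1 a2 (j + 1) * X m + a2 * bb a1 a2 j * X (m - 1) +
      ∑ i ∈ Finset.Icc 1 j, bb a1 a2 (j - i + 1) * Y (m + i) := by
  intro j
  induction j using Nat.twoStepInduction with
  | zero =>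
    simp [bb_zero, bb_one]
  | one =>
    have h := hXrec (m + 1) (by omega)
    have e1 : m + 1 - 1 = m := by omega
    have e2 : m + 1 - 2 = m - 1 := by omega
    rw [e1, e2] at h
    simp [h, bb_rec a1 a2 0, bb_zero, bb_one]
  | more j ih1 ih2 =>
    have h := hXrec (m + (j + 2)) (by omega)
    have e1 : m + (j + 2) - 1 = m + (j + 1) := by omega
    have e2 : m + (j + 2) - 2 = m + j := by omega
    rw [e1, e2, ih2, ih1] at h
    have hsum : ∑ i ∈ Finset.Icc 1 j, bb a1 a2 (j + 1 + 1 - i + 1) * Y (m + i)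
        = a1 * ∑ i ∈ Finset.Icc 1 j, bb a1 a2 (j + 1 - i + 1) * Y (m + i)
          + a2 * ∑ i ∈ Finset.Icc 1 j, bb a1 a2 (j - i + 1) * Y (m + i) := by
      rw [Finset.mul_sum, Finset.mul_sum, ← Finset.sum_add_distrib]
      refine Finset.sum_congr rfl fun i hi => ?_
      simp only [Finset.mem_Icc] at hi
      have e3 : j + 1 + 1 - i + 1 = (j - i + 1) + 2 := by omega
      have e4 : j + 1 - i + 1 = (j - i + 1) + 1 := by omega
      rw [e3, e4, bb_rec]; ring
    rw [h, show j + 2 = j + 1 + 1 by omega]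
    rw [Finset.sum_Icc_succ_top (by omega : 1 ≤ j + 1 + 1),
      Finset.sum_Icc_succ_top (by omega : 1 ≤ j + 1),
      Finset.sum_Icc_succ_top (by omega : 1 ≤ j + 1)]
    have e5 : j + 1 + 1 - (j + 1) + 1 = 2 := by omega
    have e6 : j + 1 - (j + 1) + 1 = 1 := by omega
    have e7 : j + 1 + 1 - (j + 1 + 1) + 1 = 1 := by omega
    rw [e5, e6, e7, hsum]
    have hbrec1 : bb a1 a2 (j + 1 + 1 + 1)
        = a1 * bb a1 a2 (j + 1 + 1) + a2 * bb a1 a2 (j + 1) := bb_rec a1 a2 (j + 1)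
    have hb2 : bb a1 a2 2 = a1 := by simp [bb_rec a1 a2 0, bb_zero, bb_one]
    rw [hbrec1, hb2, bb_one, bb_rec a1 a2 j]
    ring

/-- If all `X n ≤ 0` on `[1,N]` then each length-`q` block contains a non-positive `Y`. -/
lemma block_contra (a1 a2 : ℝ) (ha1 : 0 < a1) (ha2 : a2 < 0) (q : ℕ) (hq1 : 1 ≤ q)
    (hbq : bb a1 a2 (q + 1) ≤ 0) (hbpos : ∀ j, 1 ≤ j → j ≤ q → 0 < bb a1 a2 j)
    (X Y : ℕ → ℝ) (hX0 : X 0 = 0)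
    (hXrec : ∀ n, 1 ≤ n → X n = a1 * X (n - 1) + a2 * X (n - 2) + Y n)
    (N m : ℕ) (hm : m + q ≤ N) (hall : ∀ n, 1 ≤ n → n ≤ N → X n ≤ 0)
    (hY : ∀ i, 1 ≤ i → i ≤ q → 0 < Y (m + i)) : False := by
  have hid := key_id a1 a2 X Y hXrec m q
  have hXm : X m ≤ 0 := by
    rcases Nat.eq_zero_or_pos m with hm0 | hm0
    · rw [hm0, hX0]
    · exact hall m hm0 (by omega)
  have hXm1 : X (m - 1) ≤ 0 := by
    rcases Nat.lt_or_ge m 2 with hm0 | hm0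
    · have : m - 1 = 0 := by omega
      rw [this, hX0]
    · exact hall (m - 1) (by omega) (by omega)
  have h1 : 0 ≤ bb a1 a2 (q + 1) * X m := mul_nonneg_of_nonpos_of_nonpos hbq hXm
  have h2 : 0 ≤ a2 * bb a1 a2 q * X (m - 1) := by
    have : a2 * bb a1 a2 q < 0 := mul_neg_of_neg_of_pos ha2 (hbpos q hq1 le_rfl)
    exact mul_nonneg_of_nonpos_of_nonpos this.le hXm1
  have h3 : 0 < ∑ i ∈ Finset.Icc 1 q, bb a1 a2 (q - i + 1) * Y (m + i) := by
    refine Finset.sum_pos (fun i hi => ?_) ⟨1, by simp [hq1]⟩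
    simp only [Finset.mem_Icc] at hi
    exact mul_pos (hbpos _ (by omega) (by omega)) (hY i hi.1 hi.2)
  have : 0 < X (m + q) := by rw [hid]; linarith
  have := hall (m + q) (by omega) hm
  linarith

theorem stmt_13 {Ω : Type*} [MeasureSpace Ω] [IsProbabilityMeasure (ℙ : Measure Ω)]
    (a1 a2 : ℝ) (ha1 : 0 < a1) (hd : a1 ^ 2 + 4 * a2 < 0)
    (Y : ℕ → Ω → ℝ) (hmeas : ∀ n, Measurable (Y n))
    (hindep : iIndepFun Y ℙ)
    (hident : ∀ n, IdentDistrib (Y n) (Y 1) ℙ ℙ)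
    (hpos : 0 < ℙ {ω | 0 < Y 1 ω})
    (X : ℕ → Ω → ℝ) (hX0 : ∀ ω, X 0 ω = 0)
    (hXrec : ∀ n, 1 ≤ n → ∀ ω,
      X n ω = a1 * X (n - 1) ω + a2 * X (n - 2) ω + Y n ω) :
    ∃ lam > (0 : ℝ), ∃ N0 : ℕ, ∀ N, N0 ≤ N →
      ℙ {ω | ∀ n ∈ Finset.Icc 1 N, X n ω ≤ 0} ≤
        ENNReal.ofReal (Real.exp (-lam * N)) := by
  have ha2 : a2 < 0 := by nlinarith [sq_nonneg a1]
  -- the minimal q with b (q+1) ≤ 0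
  have hex : ∃ n, bb a1 a2 (n + 1) ≤ 0 := exists_bb_nonpos a1 a2 ha1 hd
  set q := Nat.find hex with hqdef
  have hbq : bb a1 a2 (q + 1) ≤ 0 := Nat.find_spec hex
  have hmin : ∀ k, k < q → 0 < bb a1 a2 (k + 1) :=
    fun k hk => lt_of_not_ge (Nat.find_min hex hk)
  have hq1 : 1 ≤ q := by
    rcases Nat.eq_zero_or_pos q with h0 | h
    · rw [h0, bb_one] at hbq; norm_num at hbq
    · exact h
  have hbpos : ∀ j, 1 ≤ j → j ≤ q → 0 < bb a1 a2 j := by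
    intro j h1 h2
    have := hmin (j - 1) (by omega)
    rwa [Nat.sub_add_cancel h1] at this
  -- the basic events
  set B : ℕ → Set Ω := fun i => {ω | 0 < Y i ω} with hB
  set A : ℕ → Set Ω := fun k => ⋂ i ∈ Finset.Icc (k * q + 1) (k * q + q), B i with hA
  have hBmeasCom : ∀ i,
      MeasurableSet[MeasurableSpace.comap (Y i) inferInstance] (B i) :=
    fun i => ⟨Set.Ioi 0, measurableSet_Ioi, rfl⟩
  have hBmeas : ∀ i, MeasurableSet (B i) := fun i => (hmeas i) measurableSet_Ioi
  have hAmeas : ∀ k, MeasurableSet (A k) :=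
    fun k => Finset.measurableSet_biInter _ (fun i _ => hBmeas i)
  -- probability of one block
  have hPB : ∀ i, ℙ (B i) = ℙ (B 1) := by
    intro i
    exact (hident i).measure_mem_eq (measurableSet_Ioi (a := (0:ℝ)))
  have hPA : ∀ k, ℙ (A k) = ℙ (B 1) ^ q := by
    intro k
    rw [hA]
    rw [hindep.meas_biInter (S := Finset.Icc (k * q + 1) (k * q + q)) (s := B)
      (fun i _ => hBmeasCom i)]
    rw [Finset.prod_congr rfl (fun i _ => hPB i), Finset.prod_const, Nat.card_Icc]
    congr 1
    omega
  -- p and r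
  have hPB1ne : ℙ (B 1) ≠ ⊤ := measure_ne_top _ _
  set p : ℝ := min (ℙ (B 1)).toReal (1 / 2) with hp
  have hppos : 0 < p := lt_min (ENNReal.toReal_pos hpos.ne' hPB1ne) (by norm_num)
  have hple1 : p ≤ 1 / 2 := min_le_right _ _
  have hple : ENNReal.ofReal p ≤ ℙ (B 1) := by
    calc ENNReal.ofReal p ≤ ENNReal.ofReal (ℙ (B 1)).toReal :=
          ENNReal.ofReal_le_ofReal (min_le_left _ _)
      _ = ℙ (B 1) := ENNReal.ofReal_toReal hPB1ne
  set r : ℝ := 1 - p ^ q with hrdef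
  have hpq1 : p ^ q ≤ p := by
    calc p ^ q ≤ p ^ 1 := pow_le_pow_of_le_one hppos.le (by linarith) hq1
      _ = p := pow_one p
  have hr0 : 0 < r := by rw [hrdef]; nlinarith
  have hr1 : r < 1 := by
    rw [hrdef]
    have : 0 < p ^ q := pow_pos hppos q
    linarith
  -- probability of block complements
  have hPAc : ∀ k, ℙ ((A k)ᶜ) ≤ ENNReal.ofReal r := by
    intro k
    rw [prob_compl_eq_one_sub (hAmeas k), hPA k]
    have h1 : ENNReal.ofReal (p ^ q) ≤ ℙ (B 1) ^ q := by
      rw [ENNReal.ofReal_pow hppos.le]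
      exact pow_le_pow_left' hple q
    calc 1 - ℙ (B 1) ^ q ≤ 1 - ENNReal.ofReal (p ^ q) := tsub_le_tsub_left h1 1
      _ = ENNReal.ofReal r := by
        rw [hrdef, ENNReal.ofReal_sub _ (by positivity), ENNReal.ofReal_one]
  -- independence across blocks
  have hcomaple : ∀ i, MeasurableSpace.comap (Y i) inferInstance ≤ _ :=
    fun i => (hmeas i).comap_le
  have hiI : iIndep (fun i => MeasurableSpace.comap (Y i) inferInstance) ℙ := hindep.iIndep
  have hmA : ∀ (S : Set ℕ) (k : ℕ), (↑(Finset.Icc (k * q + 1) (k * q + q)) : Set ℕ) ⊆ S →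
      MeasurableSet[⨆ i ∈ S, MeasurableSpace.comap (Y i) inferInstance] (A k) := by
    intro S k hsub
    refine MeasurableSet.biInter (Set.to_countable _) (fun i hi => ?_)
    have hle : MeasurableSpace.comap (Y i) inferInstance
        ≤ ⨆ i ∈ S, MeasurableSpace.comap (Y i) inferInstance :=
      le_biSup (fun i => MeasurableSpace.comap (Y i) inferInstance) (hsub (Finset.mem_coe.mpr hi))
    exact hle _ (hBmeasCom i)
  have hprod : ∀ K : ℕ, ℙ (⋂ k ∈ Finset.range K, (A k)ᶜ) ≤ ENNReal.ofReal r ^ K := by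
    intro K
    induction K with
    | zero => simp
    | succ K ih =>
      have hsplit : (⋂ k ∈ Finset.range (K + 1), (A k)ᶜ)
          = (A K)ᶜ ∩ ⋂ k ∈ Finset.range K, (A k)ᶜ := by
        rw [Finset.range_add_one]
        simp
      have hdisj : Disjoint (↑(Finset.Icc (K * q + 1) (K * q + q)) : Set ℕ)
          (↑(Finset.Icc 1 (K * q)) : Set ℕ) := by
        rw [Set.disjoint_left]
        intro i hi hi'
        simp only [Finset.coe_Icc, Set.mem_Icc] at hi hi'
        omega
      have hInd := indep_iSup_of_disjoint hcomaple hiI hdisj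
      have hmL : MeasurableSet[⨆ i ∈ (↑(Finset.Icc (K * q + 1) (K * q + q)) : Set ℕ),
          MeasurableSpace.comap (Y i) inferInstance] ((A K)ᶜ) :=
        (hmA _ K subset_rfl).compl
      have hmR : MeasurableSet[⨆ i ∈ (↑(Finset.Icc 1 (K * q)) : Set ℕ),
          MeasurableSpace.comap (Y i) inferInstance] (⋂ k ∈ Finset.range K, (A k)ᶜ) := by
        refine MeasurableSet.biInter (Set.to_countable _) (fun k hk => ?_)
        have hk' : k < K := Finset.mem_range.mp hk
        refine (hmA _ k ?_).compl
        intro i hi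
        simp only [Finset.coe_Icc, Set.mem_Icc] at hi ⊢
        constructor
        · omega
        · have : k + 1 ≤ K := hk'
          calc i ≤ k * q + q := hi.2
            _ = (k + 1) * q := by ring
            _ ≤ K * q := Nat.mul_le_mul_right q this
      rw [hsplit, (Indep_iff _ _ _).1 hInd _ _ hmL hmR, pow_succ']
      exact mul_le_mul' (hPAc K) ih
  -- the inclusion of the event in block complements
  have hincl : ∀ N : ℕ, {ω | ∀ n ∈ Finset.Icc 1 N, X n ω ≤ 0}
      ⊆ ⋂ k ∈ Finset.range (N / q), (A k)ᶜ := by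
    intro N ω hω
    simp only [Set.mem_setOf_eq, Finset.mem_Icc] at hω
    refine Set.mem_iInter₂.2 (fun k hk => ?_)
    simp only [Finset.mem_range] at hk
    intro hAk
    refine block_contra a1 a2 ha1 ha2 q hq1 hbq hbpos (fun n => X n ω) (fun n => Y n ω)
      (hX0 ω) (fun n hn => hXrec n hn ω) N (k * q) ?_ ?_ ?_
    · have h1 : (k + 1) * q ≤ (N / q) * q := Nat.mul_le_mul_right q hk
      have h2 : (N / q) * q ≤ N := Nat.div_mul_le_self N q
      calc k * q + q = (k + 1) * q := by ring
        _ ≤ N := le_trans h1 h2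
    · exact fun n h1 h2 => hω n ⟨h1, h2⟩
    · intro i h1 h2
      have := Set.mem_iInter₂.1 hAk (k * q + i) (Finset.mem_Icc.2 ⟨by omega, by omega⟩)
      exact this
  -- conclusion
  refine ⟨-Real.log r / (2 * q), ?_, 2 * q, fun N hN => ?_⟩
  · have : Real.log r < 0 := Real.log_neg hr0 hr1
    have hq0 : (0:ℝ) < 2 * q := by positivity
    exact div_pos (by linarith) hq0
  · have hqpos : 0 < q := hq1
    calc ℙ {ω | ∀ n ∈ Finset.Icc 1 N, X n ω ≤ 0}
        ≤ ℙ (⋂ k ∈ Finset.range (N / q), (A k)ᶜ) := measure_mono (hincl N)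
      _ ≤ ENNReal.ofReal r ^ (N / q) := hprod (N / q)
      _ = ENNReal.ofReal (r ^ (N / q)) := (ENNReal.ofReal_pow hr0.le _).symm
      _ ≤ ENNReal.ofReal (Real.exp (-(-Real.log r / (2 * q)) * N)) := by
        apply ENNReal.ofReal_le_ofReal
        set K := N / q with hK
        have hKnat : N ≤ 2 * (q * K) := by
          have h1 : q * K + N % q = N := Nat.div_add_mod N q
          have h2 : N % q < q := Nat.mod_lt _ hqpos
          omega
        have hKreal : (N : ℝ) ≤ 2 * q * K := by
          calc (N : ℝ) ≤ ((2 * (q * K) : ℕ) : ℝ) := by exact_mod_cast hKnat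
            _ = 2 * q * K := by push_cast; ring
        have hc : 0 ≤ -Real.log r := by
          have : Real.log r < 0 := Real.log_neg hr0 hr1
          linarith
        have hq0 : (0:ℝ) < 2 * q := by positivity
        have hrK : r ^ K = Real.exp (K * Real.log r) := by
          rw [Real.exp_nat_mul, Real.exp_log hr0]
        rw [hrK]
        apply Real.exp_le_exp.2
        rw [show -(-Real.log r / (2 * (q:ℝ))) * N = N * Real.log r / (2 * q) by ring,
          le_div_iff₀ hq0]
        nlinarith [mul_le_mul_of_nonneg_left hKreal hc]
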